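/- For every w ∈ ℝ and t ≥ 0, the compound IGCP distribution function satisfies Ĥ(w,t) = 𝟙{w ≥ 0}·exp(−Σ_{j₀=1}^{k₀} μ_{j₀} t (1 − e^{−j₀λ})) + Σ_{m=1}^∞ H^{*(m)}(w)·Σ_{(m₁,…,m_k)∈Ω(k,m)} (Π_{j=1}^k λ_j^{m_j}/m_j!) e^{−μ t} Σ_{r₁+⋯+r_{k₀}=z_k} z_k!·Π_{j₀=1}^{k₀} (j₀^{r_{j₀}}/r_{j₀}!) e^{μ_{j₀} t e^{−j₀λ}} 𝓑_{r_{j₀}}(e^{−j₀λ} μ_{j₀} t), where z_k = m₁+⋯+m_k. -/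

import Mathlib

open MeasureTheory

/-- GCP state probabilities: `p(n,t) = ∑_{Ω(k,n)} ∏_j ((λ_j t)^{x_j}/x_j!) e^{−λ_j t}`,
where index `j : Fin k` encodes jump size `j+1`. -/
noncomputable def gcpPmf (k : ℕ) (lam : Fin k → ℝ) (n : ℕ) (t : ℝ) : ℝ :=
  ∑' x : Fin k → ℕ,
    if (∑ j : Fin k, ((j : ℕ) + 1) * x j) = n then
      ∏ j : Fin k, (lam j * t) ^ (x j) / (Nat.factorial (x j)) * Real.exp (-(lam j * t))
    else 0

/-- IGCP state probabilities: `p̂(n,t) = ∑_{s=0}^∞ p(n,s) p₀(s,t)`. -/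
noncomputable def igcpPmf (k : ℕ) (lam : Fin k → ℝ) (k0 : ℕ) (mu : Fin k0 → ℝ)
    (n : ℕ) (t : ℝ) : ℝ :=
  ∑' s : ℕ, gcpPmf k lam n s * gcpPmf k0 mu s t

/-- The `n`-th order Bell polynomial `𝓑_n(x) = e^{−x} ∑_{r=0}^∞ r^n x^r / r!`. -/
noncomputable def bellPoly (n : ℕ) (x : ℝ) : ℝ :=
  Real.exp (-x) * ∑' r : ℕ, (r : ℝ) ^ n * x ^ r / (Nat.factorial r)

/-- The `m`-fold convolution of the distribution function of a probability measure `ν`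
on ℝ: `H^{*(0)}(w) = 𝟙{w ≥ 0}` and `H^{*(m+1)}(w) = ∫ H^{*(m)}(w − y) ν(dy)`.
In particular `H^{*(1)} = H` is the cdf of `ν`. -/
noncomputable def convCdf (ν : Measure ℝ) : ℕ → ℝ → ℝ
  | 0, w => if 0 ≤ w then 1 else 0
  | m + 1, w => ∫ y, convCdf ν m (w - y) ∂ν


open Finset
open scoped ENNReal Nat

/-! ### Auxiliary general lemmas -/

lemma real_exp_tsum (x : ℝ) : ∑' n : ℕ, x ^ n / (n ! : ℝ) = Real.exp x := by
  rw [Real.exp_eq_exp_ℝ, NormedSpace.exp_eq_tsum_div]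

lemma summable_bell (r : ℕ) {y : ℝ} (hy : 0 ≤ y) :
    Summable fun n : ℕ => (n : ℝ) ^ r * y ^ n / n ! := by
  refine Summable.of_nonneg_of_le (fun n => by positivity) (fun n => ?_)
    (Real.summable_pow_div_factorial (2 ^ r * y))
  have hn : (n : ℝ) ≤ 2 ^ n := by exact_mod_cast (Nat.lt_two_pow_self (n := n)).le
  have h1 : (n : ℝ) ^ r ≤ ((2 : ℝ) ^ r) ^ n := by
    calc (n : ℝ) ^ r ≤ ((2 : ℝ) ^ n) ^ r := pow_le_pow_left₀ (Nat.cast_nonneg n) hn r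
      _ = ((2 : ℝ) ^ r) ^ n := by rw [← pow_mul, ← pow_mul, Nat.mul_comm]
  rw [mul_pow]
  have h2 : (0:ℝ) ≤ n ! := by positivity
  exact div_le_div_of_nonneg_right
    (mul_le_mul_of_nonneg_right h1 (pow_nonneg hy n)) h2

lemma tsum_bell (r : ℕ) (y : ℝ) :
    ∑' n : ℕ, (n : ℝ) ^ r * y ^ n / n ! = Real.exp y * bellPoly r y := by
  rw [bellPoly, ← mul_assoc, ← Real.exp_add]
  simp

lemma bell_nonneg (r : ℕ) {y : ℝ} (hy : 0 ≤ y) : 0 ≤ bellPoly r y :=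
  mul_nonneg (Real.exp_nonneg _) (tsum_nonneg fun n => by positivity)

lemma enn_tsum_pi : ∀ {k : ℕ} (g : Fin k → ℕ → ℝ≥0∞),
    ∑' x : Fin k → ℕ, ∏ j, g j (x j) = ∏ j, ∑' n, g j n := by
  intro k
  induction k with
  | zero =>
      intro g
      simp only [Finset.univ_eq_empty, Finset.prod_empty]
      exact tsum_eq_single (fun i => i.elim0) (fun b hb => absurd (funext fun i => i.elim0) hb)
  | succ k ih =>
      intro g
      rw [← (Fin.consEquiv (fun _ : Fin (k + 1) => ℕ)).tsum_eq]
      have : ∀ p : ℕ × (Fin k → ℕ),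
          (∏ j : Fin (k + 1), g j ((Fin.consEquiv (fun _ => ℕ)) p j)) =
            g 0 p.1 * ∏ j : Fin k, g j.succ (p.2 j) := by
        intro p
        rw [Fin.prod_univ_succ]
        simp [Fin.consEquiv]
      calc ∑' p : ℕ × (Fin k → ℕ), ∏ j : Fin (k + 1), g j ((Fin.consEquiv (fun _ => ℕ)) p j)
          = ∑' p : ℕ × (Fin k → ℕ), g 0 p.1 * ∏ j : Fin k, g j.succ (p.2 j) := by
            exact tsum_congr this
        _ = ∑' (a : ℕ) (x : Fin k → ℕ), g 0 a * ∏ j : Fin k, g j.succ (x j) :=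
            ENNReal.tsum_prod'
        _ = (∑' a : ℕ, g 0 a) * ∑' x : Fin k → ℕ, ∏ j : Fin k, g j.succ (x j) := by
            simp_rw [ENNReal.tsum_mul_left, ENNReal.tsum_mul_right]
        _ = (∑' a : ℕ, g 0 a) * ∏ j : Fin k, ∑' n, g j.succ n := by
            rw [ih fun j => g j.succ]
        _ = ∏ j : Fin (k + 1), ∑' n, g j n := by
            exact (Fin.prod_univ_succ fun j : Fin (k + 1) => ∑' n, g j n).symm

lemma enn_collapse {α : Type*} (σ : α → ℕ) (G : α → ℝ≥0∞) :
    ∑' (s : ℕ) (x : α), (if σ x = s then G x else 0) = ∑' x, G x := by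
  rw [ENNReal.tsum_comm]
  refine tsum_congr fun x => ?_
  refine (tsum_eq_single (σ x) fun s hs => if_neg fun h => hs h.symm).trans (if_pos rfl)

lemma ofReal_tsum_ne_top {α : Type*} {f : α → ℝ} (hf : ∀ a, 0 ≤ f a)
    (h : ∑' a, ENNReal.ofReal (f a) ≠ ∞) :
    ENNReal.ofReal (∑' a, f a) = ∑' a, ENNReal.ofReal (f a) := by
  have hs : Summable f := by
    refine (summable_congr fun a => ?_).mp (ENNReal.summable_toReal h)
    exact ENNReal.toReal_ofReal (hf a)
  exact ENNReal.ofReal_tsum_of_nonneg hf hs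

/-! ### ENNReal version of the GCP pmf -/

noncomputable def gcpE (k : ℕ) (lam : Fin k → ℝ) (n : ℕ) (t : ℝ) : ℝ≥0∞ :=
  ∑' x : Fin k → ℕ,
    if (∑ j : Fin k, ((j : ℕ) + 1) * x j) = n then
      ENNReal.ofReal
        (∏ j : Fin k, (lam j * t) ^ (x j) / (Nat.factorial (x j)) * Real.exp (-(lam j * t)))
    else 0

section GcpE

variable {k : ℕ} {lam : Fin k → ℝ} {t : ℝ}

lemma gcp_term_nonneg (hlam : ∀ j, 0 < lam j) (ht : 0 ≤ t) (x : Fin k → ℕ) :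
    0 ≤ ∏ j : Fin k, (lam j * t) ^ (x j) / (Nat.factorial (x j)) * Real.exp (-(lam j * t)) :=
  Finset.prod_nonneg fun j _ =>
    mul_nonneg (div_nonneg (pow_nonneg (mul_nonneg (hlam j).le ht) _) (Nat.cast_nonneg _))
      (Real.exp_nonneg _)

lemma gcpPmf_nonneg (hlam : ∀ j, 0 < lam j) (ht : 0 ≤ t) (n : ℕ) :
    0 ≤ gcpPmf k lam n t :=
  tsum_nonneg fun x => by
    by_cases h : (∑ j : Fin k, ((j : ℕ) + 1) * x j) = n <;>
      simp [h, gcp_term_nonneg hlam ht x]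

lemma gcpE_sum (hlam : ∀ j, 0 < lam j) (ht : 0 ≤ t) :
    ∑' n : ℕ, gcpE k lam n t = 1 := by
  unfold gcpE
  rw [enn_collapse (fun x : Fin k → ℕ => ∑ j : Fin k, ((j : ℕ) + 1) * x j)
      (fun x => ENNReal.ofReal
        (∏ j : Fin k, (lam j * t) ^ (x j) / (Nat.factorial (x j)) * Real.exp (-(lam j * t))))]
  have h1 : ∀ x : Fin k → ℕ,
      ENNReal.ofReal
          (∏ j : Fin k, (lam j * t) ^ (x j) / (Nat.factorial (x j)) * Real.exp (-(lam j * t)))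
        = ∏ j : Fin k, ENNReal.ofReal
            ((lam j * t) ^ (x j) / (Nat.factorial (x j)) * Real.exp (-(lam j * t))) := fun x =>
    ENNReal.ofReal_prod_of_nonneg fun j _ =>
      mul_nonneg (div_nonneg (pow_nonneg (mul_nonneg (hlam j).le ht) _) (Nat.cast_nonneg _))
        (Real.exp_nonneg _)
  rw [tsum_congr h1, enn_tsum_pi
    (fun j m => ENNReal.ofReal ((lam j * t) ^ m / (Nat.factorial m) * Real.exp (-(lam j * t))))]
  have h2 : ∀ j : Fin k,
      ∑' m : ℕ, ENNReal.ofReal ((lam j * t) ^ m / (Nat.factorial m) * Real.exp (-(lam j * t)))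
        = 1 := by
    intro j
    have hs : Summable fun m : ℕ => (lam j * t) ^ m / (Nat.factorial m : ℝ) :=
      Real.summable_pow_div_factorial _
    have hnn : ∀ m : ℕ, 0 ≤ (lam j * t) ^ m / (Nat.factorial m : ℝ) := fun m =>
      div_nonneg (pow_nonneg (mul_nonneg (hlam j).le ht) _) (Nat.cast_nonneg _)
    calc ∑' m : ℕ, ENNReal.ofReal ((lam j * t) ^ m / (Nat.factorial m) * Real.exp (-(lam j * t)))
        = ∑' m : ℕ, ENNReal.ofReal ((lam j * t) ^ m / (Nat.factorial m)) *
            ENNReal.ofReal (Real.exp (-(lam j * t))) :=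
          tsum_congr fun m => ENNReal.ofReal_mul (hnn m)
      _ = ENNReal.ofReal (Real.exp (lam j * t)) * ENNReal.ofReal (Real.exp (-(lam j * t))) := by
          rw [ENNReal.tsum_mul_right, ← ENNReal.ofReal_tsum_of_nonneg hnn hs, real_exp_tsum]
      _ = 1 := by
          rw [← ENNReal.ofReal_mul (Real.exp_nonneg _), ← Real.exp_add, add_neg_cancel,
            Real.exp_zero, ENNReal.ofReal_one]
  rw [Finset.prod_congr rfl fun j _ => h2 j, Finset.prod_const_one]

lemma gcpE_le_one (hlam : ∀ j, 0 < lam j) (ht : 0 ≤ t) (n : ℕ) :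
    gcpE k lam n t ≤ 1 :=
  (ENNReal.le_tsum n).trans_eq (gcpE_sum hlam ht)

lemma ofReal_gcpPmf (hlam : ∀ j, 0 < lam j) (ht : 0 ≤ t) (n : ℕ) :
    ENNReal.ofReal (gcpPmf k lam n t) = gcpE k lam n t := by
  have hterm : ∀ x : Fin k → ℕ,
      0 ≤ (if (∑ j : Fin k, ((j : ℕ) + 1) * x j) = n then
        ∏ j : Fin k, (lam j * t) ^ (x j) / (Nat.factorial (x j)) * Real.exp (-(lam j * t))
        else 0) := fun x => by
    split
    · exact gcp_term_nonneg hlam ht x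
    · exact le_refl 0
  have h2 : ∀ x : Fin k → ℕ,
      ENNReal.ofReal (if (∑ j : Fin k, ((j : ℕ) + 1) * x j) = n then
          ∏ j : Fin k, (lam j * t) ^ (x j) / (Nat.factorial (x j)) * Real.exp (-(lam j * t))
          else 0)
        = if (∑ j : Fin k, ((j : ℕ) + 1) * x j) = n then
            ENNReal.ofReal (∏ j : Fin k,
              (lam j * t) ^ (x j) / (Nat.factorial (x j)) * Real.exp (-(lam j * t)))
          else 0 := fun x => by split <;> simp
  have he : (∑' x : Fin k → ℕ,
      ENNReal.ofReal (if (∑ j : Fin k, ((j : ℕ) + 1) * x j) = n then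
          ∏ j : Fin k, (lam j * t) ^ (x j) / (Nat.factorial (x j)) * Real.exp (-(lam j * t))
          else 0)) = gcpE k lam n t := by
    unfold gcpE
    exact tsum_congr h2
  have hfin : (∑' x : Fin k → ℕ,
      ENNReal.ofReal (if (∑ j : Fin k, ((j : ℕ) + 1) * x j) = n then
          ∏ j : Fin k, (lam j * t) ^ (x j) / (Nat.factorial (x j)) * Real.exp (-(lam j * t))
          else 0)) ≠ ∞ := by
    rw [he]
    exact ne_top_of_le_ne_top ENNReal.one_ne_top (gcpE_le_one hlam ht n)
  unfold gcpPmf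
  rw [ofReal_tsum_ne_top hterm hfin]
  exact he

end GcpE


/-! ### The inner Bell-polynomial sum -/

noncomputable def rSum (k0 : ℕ) (mu : Fin k0 → ℝ) (t L : ℝ) (z : ℕ) : ℝ :=
  ∑' r : Fin k0 → ℕ,
    if (∑ j0 : Fin k0, r j0) = z then
      (Nat.factorial z : ℝ) *
        ∏ j0 : Fin k0,
          (((j0 : ℕ) + 1 : ℝ) ^ (r j0) / (Nat.factorial (r j0))) *
            Real.exp (mu j0 * t * Real.exp (-(((j0 : ℕ) + 1 : ℝ) * L))) *
            bellPoly (r j0) (Real.exp (-(((j0 : ℕ) + 1 : ℝ) * L)) * mu j0 * t)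
    else 0

section RSum

variable {k0 : ℕ} {mu : Fin k0 → ℝ} {t L : ℝ}

lemma rSum_eq_sum (z : ℕ) :
    rSum k0 mu t L z = ∑ r ∈ Finset.piAntidiag (Finset.univ : Finset (Fin k0)) z,
      (Nat.factorial z : ℝ) *
        ∏ j0 : Fin k0,
          (((j0 : ℕ) + 1 : ℝ) ^ (r j0) / (Nat.factorial (r j0))) *
            Real.exp (mu j0 * t * Real.exp (-(((j0 : ℕ) + 1 : ℝ) * L))) *
            bellPoly (r j0) (Real.exp (-(((j0 : ℕ) + 1 : ℝ) * L)) * mu j0 * t) := by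
  unfold rSum
  rw [tsum_eq_sum (s := Finset.piAntidiag (Finset.univ : Finset (Fin k0)) z)
    (fun r hr => if_neg fun h => hr (by simp [Finset.mem_piAntidiag, h]))]
  refine Finset.sum_congr rfl fun r hr => ?_
  rw [if_pos (Finset.mem_piAntidiag.mp hr).1]

lemma rSum_term_nonneg (hmu : ∀ j0, 0 < mu j0) (ht : 0 ≤ t) (z : ℕ) (r : Fin k0 → ℕ) :
    0 ≤ (Nat.factorial z : ℝ) *
        ∏ j0 : Fin k0,
          (((j0 : ℕ) + 1 : ℝ) ^ (r j0) / (Nat.factorial (r j0))) *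
            Real.exp (mu j0 * t * Real.exp (-(((j0 : ℕ) + 1 : ℝ) * L))) *
            bellPoly (r j0) (Real.exp (-(((j0 : ℕ) + 1 : ℝ) * L)) * mu j0 * t) := by
  refine mul_nonneg (Nat.cast_nonneg _) (Finset.prod_nonneg fun j0 _ => ?_)
  refine mul_nonneg (mul_nonneg (div_nonneg (by positivity) (Nat.cast_nonneg _))
    (Real.exp_nonneg _)) (bell_nonneg _ ?_)
  exact mul_nonneg (mul_nonneg (Real.exp_nonneg _) (hmu j0).le) ht

lemma rSum_nonneg (hmu : ∀ j0, 0 < mu j0) (ht : 0 ≤ t) (z : ℕ) :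
    0 ≤ rSum k0 mu t L z := by
  rw [rSum_eq_sum]
  exact Finset.sum_nonneg fun r _ => rSum_term_nonneg hmu ht z r

lemma T_eq (hmu : ∀ j0, 0 < mu j0) (ht : 0 ≤ t) (hL : 0 ≤ L) (z : ℕ) :
    ∑' s : ℕ, ENNReal.ofReal ((s : ℝ) ^ z * Real.exp (-(L * s))) * gcpE k0 mu s t
      = ENNReal.ofReal (Real.exp (-((∑ j0 : Fin k0, mu j0) * t)) * rSum k0 mu t L z) := by
  classical
  have hynn : ∀ j0 : Fin k0, 0 ≤ Real.exp (-(((j0 : ℕ) + 1 : ℝ) * L)) * mu j0 * t := fun j0 =>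
    mul_nonneg (mul_nonneg (Real.exp_nonneg _) (hmu j0).le) ht
  have hFnn : ∀ x : Fin k0 → ℕ,
      0 ≤ ∏ j0 : Fin k0, (mu j0 * t) ^ (x j0) / (Nat.factorial (x j0)) *
        Real.exp (-(mu j0 * t)) := fun x => gcp_term_nonneg hmu ht x
  have hGnn : ∀ (r x : Fin k0 → ℕ) (j0 : Fin k0),
      0 ≤ ((j0 : ℕ) + 1 : ℝ) ^ (r j0) *
          ((x j0 : ℝ) ^ (r j0) *
            (Real.exp (-(((j0 : ℕ) + 1 : ℝ) * L)) * mu j0 * t) ^ (x j0) /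
              (Nat.factorial (x j0))) * Real.exp (-(mu j0 * t)) := by
    intro r x j0
    have := hynn j0
    positivity
  -- Step 1: expand `gcpE` and push the factor inside the sum and the if
  have h1 : ∀ s : ℕ,
      ENNReal.ofReal ((s : ℝ) ^ z * Real.exp (-(L * s))) * gcpE k0 mu s t
        = ∑' x : Fin k0 → ℕ,
            if (∑ j0 : Fin k0, ((j0 : ℕ) + 1) * x j0) = s then
              ENNReal.ofReal ((s : ℝ) ^ z * Real.exp (-(L * s))) *
                ENNReal.ofReal (∏ j0 : Fin k0,
                  (mu j0 * t) ^ (x j0) / (Nat.factorial (x j0)) * Real.exp (-(mu j0 * t)))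
            else 0 := by
    intro s
    unfold gcpE
    rw [← ENNReal.tsum_mul_left]
    exact tsum_congr fun x => by split <;> simp
  rw [tsum_congr h1, ENNReal.tsum_comm]
  -- Step 2: collapse the sum over `s`
  have h2 : ∀ x : Fin k0 → ℕ,
      (∑' s : ℕ,
        if (∑ j0 : Fin k0, ((j0 : ℕ) + 1) * x j0) = s then
          ENNReal.ofReal ((s : ℝ) ^ z * Real.exp (-(L * s))) *
            ENNReal.ofReal (∏ j0 : Fin k0,
              (mu j0 * t) ^ (x j0) / (Nat.factorial (x j0)) * Real.exp (-(mu j0 * t)))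
        else 0)
      = ENNReal.ofReal
          ((((∑ j0 : Fin k0, ((j0 : ℕ) + 1) * x j0 : ℕ) : ℝ)) ^ z *
            Real.exp (-(L * ((∑ j0 : Fin k0, ((j0 : ℕ) + 1) * x j0 : ℕ) : ℝ))) *
            ∏ j0 : Fin k0,
              (mu j0 * t) ^ (x j0) / (Nat.factorial (x j0)) * Real.exp (-(mu j0 * t))) := by
    intro x
    rw [tsum_eq_single (∑ j0 : Fin k0, ((j0 : ℕ) + 1) * x j0)
      (fun s hs => if_neg fun h => hs h.symm), if_pos rfl, ← ENNReal.ofReal_mul (by positivity)]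
  rw [tsum_congr h2]
  -- Step 3: the pointwise real identity (multinomial expansion)
  have key : ∀ x : Fin k0 → ℕ,
      (((∑ j0 : Fin k0, ((j0 : ℕ) + 1) * x j0 : ℕ) : ℝ)) ^ z *
          Real.exp (-(L * ((∑ j0 : Fin k0, ((j0 : ℕ) + 1) * x j0 : ℕ) : ℝ))) *
          (∏ j0 : Fin k0,
            (mu j0 * t) ^ (x j0) / (Nat.factorial (x j0)) * Real.exp (-(mu j0 * t)))
        = ∑ r ∈ Finset.piAntidiag (Finset.univ : Finset (Fin k0)) z,
            (Nat.multinomial Finset.univ r : ℝ) *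
              ∏ j0 : Fin k0,
                (((j0 : ℕ) + 1 : ℝ) ^ (r j0) *
                  ((x j0 : ℝ) ^ (r j0) *
                    (Real.exp (-(((j0 : ℕ) + 1 : ℝ) * L)) * mu j0 * t) ^ (x j0) /
                      (Nat.factorial (x j0))) * Real.exp (-(mu j0 * t))) := by
    intro x
    have hcast : ((∑ j0 : Fin k0, ((j0 : ℕ) + 1) * x j0 : ℕ) : ℝ)
        = ∑ j0 : Fin k0, (((j0 : ℕ) + 1 : ℝ) * (x j0 : ℝ)) := by push_cast; ring
    have hexp : Real.exp (-(L * ((∑ j0 : Fin k0, ((j0 : ℕ) + 1) * x j0 : ℕ) : ℝ)))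
        = ∏ j0 : Fin k0, Real.exp (-(((j0 : ℕ) + 1 : ℝ) * L)) ^ (x j0) := by
      have h : -(L * ((∑ j0 : Fin k0, ((j0 : ℕ) + 1) * x j0 : ℕ) : ℝ))
          = ∑ j0 : Fin k0, ((x j0 : ℝ) * (-(((j0 : ℕ) + 1 : ℝ) * L))) := by
        push_cast
        rw [Finset.mul_sum, ← Finset.sum_neg_distrib]
        exact Finset.sum_congr rfl fun j0 _ => by ring
      rw [h, Real.exp_sum]
      exact Finset.prod_congr rfl fun j0 _ => Real.exp_nat_mul _ _
    rw [hexp, hcast, Finset.sum_pow_eq_sum_piAntidiag, Finset.sum_mul, Finset.sum_mul]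
    refine Finset.sum_congr rfl fun r hr => ?_
    rw [mul_assoc, mul_assoc, ← Finset.prod_mul_distrib, ← Finset.prod_mul_distrib]
    congr 1
    refine Finset.prod_congr rfl fun j0 _ => ?_
    rw [mul_pow ((((j0 : Fin k0) : ℕ) : ℝ) + 1) ((x j0 : ℕ) : ℝ) (r j0)]
    ring
  calc
    ∑' x : Fin k0 → ℕ, ENNReal.ofReal
        ((((∑ j0 : Fin k0, ((j0 : ℕ) + 1) * x j0 : ℕ) : ℝ)) ^ z *
          Real.exp (-(L * ((∑ j0 : Fin k0, ((j0 : ℕ) + 1) * x j0 : ℕ) : ℝ))) *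
          ∏ j0 : Fin k0,
            (mu j0 * t) ^ (x j0) / (Nat.factorial (x j0)) * Real.exp (-(mu j0 * t)))
      = ∑' x : Fin k0 → ℕ, ∑ r ∈ Finset.piAntidiag (Finset.univ : Finset (Fin k0)) z,
          ENNReal.ofReal ((Nat.multinomial Finset.univ r : ℝ) *
            ∏ j0 : Fin k0,
              (((j0 : ℕ) + 1 : ℝ) ^ (r j0) *
                ((x j0 : ℝ) ^ (r j0) *
                  (Real.exp (-(((j0 : ℕ) + 1 : ℝ) * L)) * mu j0 * t) ^ (x j0) /
                    (Nat.factorial (x j0))) * Real.exp (-(mu j0 * t)))) := by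
        refine tsum_congr fun x => ?_
        rw [key x]
        exact ENNReal.ofReal_sum_of_nonneg fun r _ =>
          mul_nonneg (Nat.cast_nonneg _) (Finset.prod_nonneg fun j0 _ => hGnn r x j0)
    _ = ∑ r ∈ Finset.piAntidiag (Finset.univ : Finset (Fin k0)) z,
          ∑' x : Fin k0 → ℕ,
          ENNReal.ofReal ((Nat.multinomial Finset.univ r : ℝ) *
            ∏ j0 : Fin k0,
              (((j0 : ℕ) + 1 : ℝ) ^ (r j0) *
                ((x j0 : ℝ) ^ (r j0) *
                  (Real.exp (-(((j0 : ℕ) + 1 : ℝ) * L)) * mu j0 * t) ^ (x j0) /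
                    (Nat.factorial (x j0))) * Real.exp (-(mu j0 * t)))) :=
        Summable.tsum_finsetSum fun r _ => ENNReal.summable
    _ = ∑ r ∈ Finset.piAntidiag (Finset.univ : Finset (Fin k0)) z,
          ENNReal.ofReal ((Nat.multinomial Finset.univ r : ℝ) *
            ∏ j0 : Fin k0,
              (((j0 : ℕ) + 1 : ℝ) ^ (r j0) * Real.exp (-(mu j0 * t)) *
                (Real.exp (Real.exp (-(((j0 : ℕ) + 1 : ℝ) * L)) * mu j0 * t) *
                  bellPoly (r j0) (Real.exp (-(((j0 : ℕ) + 1 : ℝ) * L)) * mu j0 * t)))) := by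
        refine Finset.sum_congr rfl fun r _ => ?_
        have e1 : ∀ x : Fin k0 → ℕ,
            ENNReal.ofReal ((Nat.multinomial Finset.univ r : ℝ) *
              ∏ j0 : Fin k0,
                (((j0 : ℕ) + 1 : ℝ) ^ (r j0) *
                  ((x j0 : ℝ) ^ (r j0) *
                    (Real.exp (-(((j0 : ℕ) + 1 : ℝ) * L)) * mu j0 * t) ^ (x j0) /
                      (Nat.factorial (x j0))) * Real.exp (-(mu j0 * t))))
              = ENNReal.ofReal (Nat.multinomial Finset.univ r : ℝ) *
                  ∏ j0 : Fin k0, ENNReal.ofReal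
                    (((j0 : ℕ) + 1 : ℝ) ^ (r j0) *
                      ((x j0 : ℝ) ^ (r j0) *
                        (Real.exp (-(((j0 : ℕ) + 1 : ℝ) * L)) * mu j0 * t) ^ (x j0) /
                          (Nat.factorial (x j0))) * Real.exp (-(mu j0 * t))) := by
          intro x
          rw [ENNReal.ofReal_mul (Nat.cast_nonneg _),
            ENNReal.ofReal_prod_of_nonneg fun j0 _ => hGnn r x j0]
        rw [tsum_congr e1, ENNReal.tsum_mul_left, enn_tsum_pi
          (fun j0 m => ENNReal.ofReal
            (((j0 : ℕ) + 1 : ℝ) ^ (r j0) *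
              ((m : ℝ) ^ (r j0) *
                (Real.exp (-(((j0 : ℕ) + 1 : ℝ) * L)) * mu j0 * t) ^ m /
                  (Nat.factorial m)) * Real.exp (-(mu j0 * t))))]
        have e2 : ∀ j0 : Fin k0,
            (∑' m : ℕ, ENNReal.ofReal
              (((j0 : ℕ) + 1 : ℝ) ^ (r j0) *
                ((m : ℝ) ^ (r j0) *
                  (Real.exp (-(((j0 : ℕ) + 1 : ℝ) * L)) * mu j0 * t) ^ m /
                    (Nat.factorial m)) * Real.exp (-(mu j0 * t))))
              = ENNReal.ofReal
                  (((j0 : ℕ) + 1 : ℝ) ^ (r j0) * Real.exp (-(mu j0 * t)) *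
                    (Real.exp (Real.exp (-(((j0 : ℕ) + 1 : ℝ) * L)) * mu j0 * t) *
                      bellPoly (r j0) (Real.exp (-(((j0 : ℕ) + 1 : ℝ) * L)) * mu j0 * t))) := by
          intro j0
          have hb := summable_bell (r j0) (hynn j0)
          have hbn : ∀ m : ℕ, 0 ≤ (m : ℝ) ^ (r j0) *
              (Real.exp (-(((j0 : ℕ) + 1 : ℝ) * L)) * mu j0 * t) ^ m / (Nat.factorial m) :=
            fun m => by have := hynn j0; positivity
          have e3 : ∀ m : ℕ,
              (((j0 : ℕ) + 1 : ℝ) ^ (r j0) *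
                ((m : ℝ) ^ (r j0) *
                  (Real.exp (-(((j0 : ℕ) + 1 : ℝ) * L)) * mu j0 * t) ^ m /
                    (Nat.factorial m)) * Real.exp (-(mu j0 * t)))
              = (((j0 : ℕ) + 1 : ℝ) ^ (r j0) * Real.exp (-(mu j0 * t))) *
                  ((m : ℝ) ^ (r j0) *
                    (Real.exp (-(((j0 : ℕ) + 1 : ℝ) * L)) * mu j0 * t) ^ m /
                      (Nat.factorial m)) := fun m => by ring
          calc (∑' m : ℕ, ENNReal.ofReal
              (((j0 : ℕ) + 1 : ℝ) ^ (r j0) *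
                ((m : ℝ) ^ (r j0) *
                  (Real.exp (-(((j0 : ℕ) + 1 : ℝ) * L)) * mu j0 * t) ^ m /
                    (Nat.factorial m)) * Real.exp (-(mu j0 * t))))
              = ∑' m : ℕ, ENNReal.ofReal (((j0 : ℕ) + 1 : ℝ) ^ (r j0) *
                  Real.exp (-(mu j0 * t))) * ENNReal.ofReal
                  ((m : ℝ) ^ (r j0) *
                    (Real.exp (-(((j0 : ℕ) + 1 : ℝ) * L)) * mu j0 * t) ^ m /
                      (Nat.factorial m)) := by
                refine tsum_congr fun m => ?_
                rw [e3 m, ENNReal.ofReal_mul (by positivity)]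
            _ = ENNReal.ofReal (((j0 : ℕ) + 1 : ℝ) ^ (r j0) * Real.exp (-(mu j0 * t))) *
                  ENNReal.ofReal (∑' m : ℕ, (m : ℝ) ^ (r j0) *
                    (Real.exp (-(((j0 : ℕ) + 1 : ℝ) * L)) * mu j0 * t) ^ m /
                      (Nat.factorial m)) := by
                rw [ENNReal.tsum_mul_left, ← ENNReal.ofReal_tsum_of_nonneg hbn hb]
            _ = _ := by
                rw [tsum_bell, ← ENNReal.ofReal_mul (by positivity)]
        rw [Finset.prod_congr rfl fun j0 _ => e2 j0,
          ← ENNReal.ofReal_prod_of_nonneg fun j0 _ => by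
            have := hynn j0
            have := bell_nonneg (r j0) (hynn j0)
            positivity,
          ← ENNReal.ofReal_mul (Nat.cast_nonneg _)]
    _ = ENNReal.ofReal (Real.exp (-((∑ j0 : Fin k0, mu j0) * t)) * rSum k0 mu t L z) := by
        rw [rSum_eq_sum, Finset.mul_sum,
          ENNReal.ofReal_sum_of_nonneg fun r _ =>
            mul_nonneg (Real.exp_nonneg _) (rSum_term_nonneg hmu ht z r)]
        refine Finset.sum_congr rfl fun r hr => ?_
        congr 1
        have hrsum : ∑ j0 : Fin k0, r j0 = z := (Finset.mem_piAntidiag.mp hr).1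
        have hfacne : (∏ j0 : Fin k0, ((Nat.factorial (r j0)) : ℝ)) ≠ 0 := by positivity
        have hM : (Nat.multinomial (Finset.univ : Finset (Fin k0)) r : ℝ)
            = (Nat.factorial z : ℝ) / ∏ j0 : Fin k0, ((Nat.factorial (r j0)) : ℝ) := by
          rw [eq_div_iff hfacne, ← hrsum]
          exact_mod_cast (mul_comm _ _).trans (Nat.multinomial_spec _ _)
        have hE : Real.exp (-((∑ j0 : Fin k0, mu j0) * t))
            = ∏ j0 : Fin k0, Real.exp (-(mu j0 * t)) := by
          rw [← Real.exp_sum]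
          congr 1
          rw [Finset.sum_mul, ← Finset.sum_neg_distrib]
        have hs1 : (∏ j0 : Fin k0,
            (((j0 : ℕ) + 1 : ℝ) ^ (r j0) * Real.exp (-(mu j0 * t)) *
              (Real.exp (Real.exp (-(((j0 : ℕ) + 1 : ℝ) * L)) * mu j0 * t) *
                bellPoly (r j0) (Real.exp (-(((j0 : ℕ) + 1 : ℝ) * L)) * mu j0 * t))))
            = (∏ j0 : Fin k0, Real.exp (-(mu j0 * t))) *
              ∏ j0 : Fin k0,
                (((j0 : ℕ) + 1 : ℝ) ^ (r j0) *
                  (Real.exp (Real.exp (-(((j0 : ℕ) + 1 : ℝ) * L)) * mu j0 * t) *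
                    bellPoly (r j0) (Real.exp (-(((j0 : ℕ) + 1 : ℝ) * L)) * mu j0 * t))) := by
          rw [← Finset.prod_mul_distrib]
          exact Finset.prod_congr rfl fun j0 _ => by ring
        have hs2 : (∏ j0 : Fin k0,
            (((j0 : ℕ) + 1 : ℝ) ^ (r j0) / (Nat.factorial (r j0)) *
              Real.exp (mu j0 * t * Real.exp (-(((j0 : ℕ) + 1 : ℝ) * L))) *
              bellPoly (r j0) (Real.exp (-(((j0 : ℕ) + 1 : ℝ) * L)) * mu j0 * t)))
            = (∏ j0 : Fin k0, ((Nat.factorial (r j0)) : ℝ))⁻¹ *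
              ∏ j0 : Fin k0,
                (((j0 : ℕ) + 1 : ℝ) ^ (r j0) *
                  (Real.exp (Real.exp (-(((j0 : ℕ) + 1 : ℝ) * L)) * mu j0 * t) *
                    bellPoly (r j0) (Real.exp (-(((j0 : ℕ) + 1 : ℝ) * L)) * mu j0 * t))) := by
          rw [← Finset.prod_inv_distrib, ← Finset.prod_mul_distrib]
          refine Finset.prod_congr rfl fun j0 _ => ?_
          rw [show mu j0 * t * Real.exp (-(((j0 : ℕ) + 1 : ℝ) * L))
            = Real.exp (-(((j0 : ℕ) + 1 : ℝ) * L)) * mu j0 * t from by ring]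
          ring
        rw [hM, hE, hs1, hs2]
        ring

end RSum


/-! ### Main computation -/

noncomputable def innerR (k : ℕ) (lam : Fin k → ℝ) (k0 : ℕ) (mu : Fin k0 → ℝ)
    (t : ℝ) (n : ℕ) : ℝ :=
  ∑' mv : Fin k → ℕ,
    if (∑ j : Fin k, ((j : ℕ) + 1) * mv j) = n then
      (∏ j : Fin k, lam j ^ (mv j) / (Nat.factorial (mv j))) *
        Real.exp (-((∑ j0 : Fin k0, mu j0) * t)) *
        rSum k0 mu t (∑ j : Fin k, lam j) (∑ j : Fin k, mv j)
    else 0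

section Main

variable {k : ℕ} {lam : Fin k → ℝ} {k0 : ℕ} {mu : Fin k0 → ℝ} {t : ℝ}

lemma C_nonneg (hlam : ∀ j, 0 < lam j) (mv : Fin k → ℕ) :
    0 ≤ ∏ j : Fin k, lam j ^ (mv j) / (Nat.factorial (mv j)) :=
  Finset.prod_nonneg fun j _ => div_nonneg (pow_nonneg (hlam j).le _) (Nat.cast_nonneg _)

lemma igcpE_eq (hlam : ∀ j, 0 < lam j) (hmu : ∀ j0, 0 < mu j0) (ht : 0 ≤ t) (n : ℕ) :
    ∑' s : ℕ, gcpE k lam n s * gcpE k0 mu s t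
      = ∑' mv : Fin k → ℕ,
          if (∑ j : Fin k, ((j : ℕ) + 1) * mv j) = n then
            ENNReal.ofReal ((∏ j : Fin k, lam j ^ (mv j) / (Nat.factorial (mv j))) *
              Real.exp (-((∑ j0 : Fin k0, mu j0) * t)) *
              rSum k0 mu t (∑ j : Fin k, lam j) (∑ j : Fin k, mv j))
          else 0 := by
  have hL : 0 ≤ ∑ j : Fin k, lam j := Finset.sum_nonneg fun j _ => (hlam j).le
  have hg : ∀ s : ℕ, gcpE k lam n s
      = ∑' mv : Fin k → ℕ,
          if (∑ j : Fin k, ((j : ℕ) + 1) * mv j) = n then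
            ENNReal.ofReal ((∏ j : Fin k, lam j ^ (mv j) / (Nat.factorial (mv j))) *
              ((s : ℝ) ^ (∑ j : Fin k, mv j) *
                Real.exp (-((∑ j : Fin k, lam j) * (s : ℝ)))))
          else 0 := by
    intro s
    unfold gcpE
    refine tsum_congr fun mv => ?_
    split
    · congr 1
      have e1 : ∀ j : Fin k, (lam j * (s : ℝ)) ^ (mv j) / (Nat.factorial (mv j)) *
            Real.exp (-(lam j * (s : ℝ)))
          = lam j ^ (mv j) / (Nat.factorial (mv j)) * (s : ℝ) ^ (mv j) *
            Real.exp (-(lam j * (s : ℝ))) := fun j => by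
        rw [mul_pow]; ring
      rw [Finset.prod_congr rfl fun j _ => e1 j, Finset.prod_mul_distrib,
        Finset.prod_mul_distrib, Finset.prod_pow_eq_pow_sum, ← Real.exp_sum]
      have e2 : ∑ j : Fin k, -(lam j * (s : ℝ)) = -((∑ j : Fin k, lam j) * (s : ℝ)) := by
        rw [Finset.sum_neg_distrib, Finset.sum_mul]
      rw [e2]; ring
    · rfl
  calc ∑' s : ℕ, gcpE k lam n s * gcpE k0 mu s t
      = ∑' (s : ℕ) (mv : Fin k → ℕ),
          (if (∑ j : Fin k, ((j : ℕ) + 1) * mv j) = n then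
            ENNReal.ofReal ((∏ j : Fin k, lam j ^ (mv j) / (Nat.factorial (mv j))) *
              ((s : ℝ) ^ (∑ j : Fin k, mv j) *
                Real.exp (-((∑ j : Fin k, lam j) * (s : ℝ))))) * gcpE k0 mu s t
          else 0) := by
        refine tsum_congr fun s => ?_
        rw [hg s, ← ENNReal.tsum_mul_right]
        exact tsum_congr fun mv => by split <;> simp
    _ = ∑' (mv : Fin k → ℕ) (s : ℕ),
          (if (∑ j : Fin k, ((j : ℕ) + 1) * mv j) = n then
            ENNReal.ofReal ((∏ j : Fin k, lam j ^ (mv j) / (Nat.factorial (mv j))) *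
              ((s : ℝ) ^ (∑ j : Fin k, mv j) *
                Real.exp (-((∑ j : Fin k, lam j) * (s : ℝ))))) * gcpE k0 mu s t
          else 0) := ENNReal.tsum_comm
    _ = ∑' mv : Fin k → ℕ,
          if (∑ j : Fin k, ((j : ℕ) + 1) * mv j) = n then
            ENNReal.ofReal (∏ j : Fin k, lam j ^ (mv j) / (Nat.factorial (mv j))) *
              ∑' s : ℕ, ENNReal.ofReal ((s : ℝ) ^ (∑ j : Fin k, mv j) *
                Real.exp (-((∑ j : Fin k, lam j) * (s : ℝ)))) * gcpE k0 mu s t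
          else 0 := by
        refine tsum_congr fun mv => ?_
        by_cases hc : (∑ j : Fin k, ((j : ℕ) + 1) * mv j) = n
        · simp only [if_pos hc]
          rw [← ENNReal.tsum_mul_left]
          refine tsum_congr fun s => ?_
          rw [ENNReal.ofReal_mul (C_nonneg hlam mv), mul_assoc]
        · simp [hc]
    _ = _ := by
        refine tsum_congr fun mv => ?_
        by_cases hc : (∑ j : Fin k, ((j : ℕ) + 1) * mv j) = n
        · simp only [if_pos hc]
          rw [T_eq hmu ht hL (∑ j : Fin k, mv j),
            ← ENNReal.ofReal_mul (C_nonneg hlam mv), mul_assoc]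
        · simp [hc]

lemma igcpE_mul_le_one (hlam : ∀ j, 0 < lam j) (hmu : ∀ j0, 0 < mu j0) (ht : 0 ≤ t) (n : ℕ) :
    ∑' s : ℕ, gcpE k lam n s * gcpE k0 mu s t ≤ 1 := by
  calc ∑' s : ℕ, gcpE k lam n s * gcpE k0 mu s t
      ≤ ∑' s : ℕ, 1 * gcpE k0 mu s t :=
        ENNReal.tsum_le_tsum fun s =>
          mul_le_mul_left (gcpE_le_one hlam (Nat.cast_nonneg s) n) _
    _ = 1 := by rw [tsum_congr fun s : ℕ => one_mul (gcpE k0 mu s t), gcpE_sum hmu ht]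

lemma igcpPmf_nonneg (hlam : ∀ j, 0 < lam j) (hmu : ∀ j0, 0 < mu j0) (ht : 0 ≤ t) (n : ℕ) :
    0 ≤ igcpPmf k lam k0 mu n t :=
  tsum_nonneg fun s => mul_nonneg (gcpPmf_nonneg hlam (Nat.cast_nonneg s) n)
    (gcpPmf_nonneg hmu ht s)

lemma ofReal_igcpPmf (hlam : ∀ j, 0 < lam j) (hmu : ∀ j0, 0 < mu j0) (ht : 0 ≤ t) (n : ℕ) :
    ENNReal.ofReal (igcpPmf k lam k0 mu n t)
      = ∑' s : ℕ, gcpE k lam n s * gcpE k0 mu s t := by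
  have hcong : ∀ s : ℕ,
      ENNReal.ofReal (gcpPmf k lam n s * gcpPmf k0 mu s t)
        = gcpE k lam n s * gcpE k0 mu s t := fun s => by
    rw [ENNReal.ofReal_mul (gcpPmf_nonneg hlam (Nat.cast_nonneg s) n),
      ofReal_gcpPmf hlam (Nat.cast_nonneg s) n, ofReal_gcpPmf hmu ht s]
  have hfin : (∑' s : ℕ, ENNReal.ofReal (gcpPmf k lam n s * gcpPmf k0 mu s t)) ≠ ∞ := by
    rw [tsum_congr hcong]
    exact ne_top_of_le_ne_top ENNReal.one_ne_top (igcpE_mul_le_one hlam hmu ht n)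
  unfold igcpPmf
  rw [ofReal_tsum_ne_top (fun s => mul_nonneg (gcpPmf_nonneg hlam (Nat.cast_nonneg s) n)
    (gcpPmf_nonneg hmu ht s)) hfin]
  exact tsum_congr hcong

lemma innerR_term_nonneg (hlam : ∀ j, 0 < lam j) (hmu : ∀ j0, 0 < mu j0) (ht : 0 ≤ t)
    (n : ℕ) (mv : Fin k → ℕ) :
    0 ≤ (if (∑ j : Fin k, ((j : ℕ) + 1) * mv j) = n then
        (∏ j : Fin k, lam j ^ (mv j) / (Nat.factorial (mv j))) *
          Real.exp (-((∑ j0 : Fin k0, mu j0) * t)) *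
          rSum k0 mu t (∑ j : Fin k, lam j) (∑ j : Fin k, mv j)
      else 0) := by
  split
  · exact mul_nonneg (mul_nonneg (C_nonneg hlam mv) (Real.exp_nonneg _))
      (rSum_nonneg hmu ht _)
  · exact le_refl 0

lemma ofReal_innerR (hlam : ∀ j, 0 < lam j) (hmu : ∀ j0, 0 < mu j0) (ht : 0 ≤ t) (n : ℕ) :
    ENNReal.ofReal (innerR k lam k0 mu t n)
      = ∑' mv : Fin k → ℕ,
          if (∑ j : Fin k, ((j : ℕ) + 1) * mv j) = n then
            ENNReal.ofReal ((∏ j : Fin k, lam j ^ (mv j) / (Nat.factorial (mv j))) *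
              Real.exp (-((∑ j0 : Fin k0, mu j0) * t)) *
              rSum k0 mu t (∑ j : Fin k, lam j) (∑ j : Fin k, mv j))
          else 0 := by
  have hcong : ∀ mv : Fin k → ℕ,
      ENNReal.ofReal (if (∑ j : Fin k, ((j : ℕ) + 1) * mv j) = n then
          (∏ j : Fin k, lam j ^ (mv j) / (Nat.factorial (mv j))) *
            Real.exp (-((∑ j0 : Fin k0, mu j0) * t)) *
            rSum k0 mu t (∑ j : Fin k, lam j) (∑ j : Fin k, mv j)
        else 0)
        = if (∑ j : Fin k, ((j : ℕ) + 1) * mv j) = n then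
            ENNReal.ofReal ((∏ j : Fin k, lam j ^ (mv j) / (Nat.factorial (mv j))) *
              Real.exp (-((∑ j0 : Fin k0, mu j0) * t)) *
              rSum k0 mu t (∑ j : Fin k, lam j) (∑ j : Fin k, mv j))
          else 0 := fun mv => by split <;> simp
  have hfin : (∑' mv : Fin k → ℕ,
      ENNReal.ofReal (if (∑ j : Fin k, ((j : ℕ) + 1) * mv j) = n then
          (∏ j : Fin k, lam j ^ (mv j) / (Nat.factorial (mv j))) *
            Real.exp (-((∑ j0 : Fin k0, mu j0) * t)) *
            rSum k0 mu t (∑ j : Fin k, lam j) (∑ j : Fin k, mv j)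
        else 0)) ≠ ∞ := by
    rw [tsum_congr hcong, ← igcpE_eq hlam hmu ht n]
    exact ne_top_of_le_ne_top ENNReal.one_ne_top (igcpE_mul_le_one hlam hmu ht n)
  unfold innerR
  rw [ofReal_tsum_ne_top (innerR_term_nonneg hlam hmu ht n) hfin]
  exact tsum_congr hcong

lemma innerR_nonneg (hlam : ∀ j, 0 < lam j) (hmu : ∀ j0, 0 < mu j0) (ht : 0 ≤ t) (n : ℕ) :
    0 ≤ innerR k lam k0 mu t n :=
  tsum_nonneg (innerR_term_nonneg hlam hmu ht n)

lemma igcp_eq_innerR (hlam : ∀ j, 0 < lam j) (hmu : ∀ j0, 0 < mu j0) (ht : 0 ≤ t) (n : ℕ) :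
    igcpPmf k lam k0 mu n t = innerR k lam k0 mu t n := by
  rw [← ENNReal.ofReal_eq_ofReal_iff (igcpPmf_nonneg hlam hmu ht n)
    (innerR_nonneg hlam hmu ht n), ofReal_igcpPmf hlam hmu ht n,
    igcpE_eq hlam hmu ht n, ofReal_innerR hlam hmu ht n]

lemma igcpE_total (hlam : ∀ j, 0 < lam j) (hmu : ∀ j0, 0 < mu j0) (ht : 0 ≤ t) :
    ∑' (n : ℕ) (s : ℕ), gcpE k lam n s * gcpE k0 mu s t = 1 := by
  rw [ENNReal.tsum_comm]
  have h : ∀ s : ℕ, ∑' n : ℕ, gcpE k lam n s * gcpE k0 mu s t = gcpE k0 mu s t := by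
    intro s
    rw [ENNReal.tsum_mul_right, gcpE_sum hlam (Nat.cast_nonneg s), one_mul]
  rw [tsum_congr h, gcpE_sum hmu ht]

lemma summable_igcp (hlam : ∀ j, 0 < lam j) (hmu : ∀ j0, 0 < mu j0) (ht : 0 ≤ t) :
    Summable fun m : ℕ => igcpPmf k lam k0 mu m t := by
  have h : (∑' m : ℕ, ENNReal.ofReal (igcpPmf k lam k0 mu m t)) ≠ ∞ := by
    rw [tsum_congr fun m => ofReal_igcpPmf hlam hmu ht m, igcpE_total hlam hmu ht]
    exact ENNReal.one_ne_top
  refine (summable_congr fun m => ?_).mp (ENNReal.summable_toReal h)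
  exact ENNReal.toReal_ofReal (igcpPmf_nonneg hlam hmu ht m)

lemma bellPoly_zero (y : ℝ) : bellPoly 0 y = 1 := by
  unfold bellPoly
  have : ∀ r : ℕ, (r : ℝ) ^ (0 : ℕ) * y ^ r / (Nat.factorial r) = y ^ r / (Nat.factorial r) :=
    fun r => by rw [pow_zero, one_mul]
  rw [tsum_congr this, real_exp_tsum, ← Real.exp_add, neg_add_cancel, Real.exp_zero]

lemma innerR_zero (hlam : ∀ j, 0 < lam j) (hmu : ∀ j0, 0 < mu j0) (ht : 0 ≤ t) :
    innerR k lam k0 mu t 0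
      = Real.exp (-(∑ j0 : Fin k0, mu j0 * t *
          (1 - Real.exp (-(((j0 : ℕ) + 1 : ℝ) * ∑ j : Fin k, lam j))))) := by
  unfold innerR
  rw [tsum_eq_single 0 (fun mv hmv => if_neg fun h => hmv (funext fun j => by
    have h1 := (Finset.sum_eq_zero_iff.mp h) j (Finset.mem_univ j)
    have h2 : mv j = 0 := by
      rcases Nat.mul_eq_zero.mp h1 with h' | h'
      · exact absurd h' (Nat.succ_ne_zero _)
      · exact h'
    simp [h2]))]
  rw [if_pos (by simp)]
  have hC : (∏ j : Fin k, lam j ^ ((0 : Fin k → ℕ) j) /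
      (Nat.factorial ((0 : Fin k → ℕ) j))) = 1 := by simp
  have hz : (∑ j : Fin k, (0 : Fin k → ℕ) j) = 0 := by simp
  rw [hC, hz, one_mul]
  have hR : rSum k0 mu t (∑ j : Fin k, lam j) 0
      = ∏ j0 : Fin k0, Real.exp (mu j0 * t *
          Real.exp (-(((j0 : ℕ) + 1 : ℝ) * ∑ j : Fin k, lam j))) := by
    rw [rSum_eq_sum, Finset.piAntidiag_zero, Finset.sum_singleton]
    simp [bellPoly_zero]
  rw [hR, ← Real.exp_sum, ← Real.exp_add]
  congr 1
  rw [← Finset.sum_neg_distrib, Finset.sum_mul, ← Finset.sum_neg_distrib,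
    ← Finset.sum_add_distrib]
  exact Finset.sum_congr rfl fun j0 _ => by ring

end Main


lemma convCdf_props (ν : Measure ℝ) [IsProbabilityMeasure ν] :
    ∀ m : ℕ, Monotone (convCdf ν m) ∧ ∀ w : ℝ, 0 ≤ convCdf ν m w ∧ convCdf ν m w ≤ 1 := by
  intro m
  induction m with
  | zero =>
      constructor
      · intro a b hab
        simp only [convCdf]
        split_ifs with h1 h2 <;> norm_num
        exact h2 (h1.trans hab)
      · intro w
        simp only [convCdf]
        split_ifs <;> norm_num
  | succ m ih =>
      obtain ⟨hmono, hb⟩ := ih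
      have hmeas : Measurable (convCdf ν m) := hmono.measurable
      have hint : ∀ w : ℝ, Integrable (fun y => convCdf ν m (w - y)) ν := by
        intro w
        refine ⟨(hmeas.comp (measurable_const.sub measurable_id)).aestronglyMeasurable, ?_⟩
        refine MeasureTheory.HasFiniteIntegral.of_bounded (C := 1) ?_
        refine Filter.Eventually.of_forall fun y => ?_
        rw [Real.norm_eq_abs, abs_le]
        exact ⟨by linarith [(hb (w - y)).1], (hb (w - y)).2⟩
      constructor
      · intro a b hab
        simp only [convCdf]
        exact integral_mono (hint a) (hint b) fun y => hmono (by linarith)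
      · intro w
        simp only [convCdf]
        constructor
        · exact integral_nonneg fun y => (hb _).1
        · calc ∫ y, convCdf ν m (w - y) ∂ν
              ≤ ∫ _, (1 : ℝ) ∂ν := integral_mono (hint w) (integrable_const 1)
                fun y => (hb _).2
            _ = 1 := by simp

/-- the distribution function of the compound IGCP
`Ĥ(w,t) = ∑_{m=0}^∞ p̂(m,t) H^{*(m)}(w)` in terms of Bell polynomials. -/
theorem compound_igcp_cdf (k : ℕ) (hk : 0 < k) (lam : Fin k → ℝ) (hlam : ∀ j, 0 < lam j)
    (k0 : ℕ) (hk0 : 0 < k0) (mu : Fin k0 → ℝ) (hmu : ∀ j0, 0 < mu j0)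
    (ν : Measure ℝ) [IsProbabilityMeasure ν]
    (w : ℝ) (t : ℝ) (ht : 0 ≤ t) :
    ∑' m : ℕ, igcpPmf k lam k0 mu m t * convCdf ν m w =
      (if 0 ≤ w then 1 else 0) *
          Real.exp (-(∑ j0 : Fin k0, mu j0 * t *
            (1 - Real.exp (-(((j0 : ℕ) + 1 : ℝ) * ∑ j : Fin k, lam j))))) +
        ∑' m : ℕ, convCdf ν (m + 1) w *
          ∑' mv : Fin k → ℕ,
            if (∑ j : Fin k, ((j : ℕ) + 1) * mv j) = m + 1 then
              (∏ j : Fin k, lam j ^ (mv j) / (Nat.factorial (mv j))) *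
                Real.exp (-((∑ j0 : Fin k0, mu j0) * t)) *
                ∑' r : Fin k0 → ℕ,
                  if (∑ j0 : Fin k0, r j0) = (∑ j : Fin k, mv j) then
                    (Nat.factorial (∑ j : Fin k, mv j) : ℝ) *
                      ∏ j0 : Fin k0,
                        (((j0 : ℕ) + 1 : ℝ) ^ (r j0) / (Nat.factorial (r j0))) *
                          Real.exp (mu j0 * t *
                            Real.exp (-(((j0 : ℕ) + 1 : ℝ) * ∑ j : Fin k, lam j))) *
                          bellPoly (r j0)
                            (Real.exp (-(((j0 : ℕ) + 1 : ℝ) * ∑ j : Fin k, lam j)) *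
                              mu j0 * t)
                  else 0
            else 0 := by
  have hcc := convCdf_props ν
  have hig0 : ∀ m : ℕ, 0 ≤ igcpPmf k lam k0 mu m t := igcpPmf_nonneg hlam hmu ht
  have hf : Summable fun m : ℕ => igcpPmf k lam k0 mu m t * convCdf ν m w := by
    refine Summable.of_nonneg_of_le
      (fun m => mul_nonneg (hig0 m) ((hcc m).2 w).1) (fun m => ?_)
      (summable_igcp hlam hmu ht)
    calc igcpPmf k lam k0 mu m t * convCdf ν m w
        ≤ igcpPmf k lam k0 mu m t * 1 :=
          mul_le_mul_of_nonneg_left ((hcc m).2 w).2 (hig0 m)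
      _ = igcpPmf k lam k0 mu m t := mul_one _
  rw [hf.tsum_eq_zero_add]
  congr 1
  · rw [igcp_eq_innerR hlam hmu ht 0, innerR_zero hlam hmu ht,
      show convCdf ν 0 w = if 0 ≤ w then (1 : ℝ) else 0 from rfl, mul_comm]
  · refine tsum_congr fun m => ?_
    rw [igcp_eq_innerR hlam hmu ht (m + 1), mul_comm]
    congr 1
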